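/- arXiv:1701.06139 — 3 statements merged into one kernel-verified Lean document; each statement's English description precedes it below -/
import Mathlib

section
/- If G is a 2-uniform graph in which a largest clique has order t, then λ(G) = λ(K_t) = (1/2)(1 − 1/t). -/
structure RHypergraph (r : ℕ) where
  verts : Finset ℕ
  edges : Finset (Finset ℕ)
  edge_sub : ∀ e ∈ edges, e ⊆ verts
  edge_card : ∀ e ∈ edges, e.card = r

namespace RHypergraph

variable {r : ℕ}

/-- The polynomial value `λ(E, x) = Σ_{e ∈ E} Π_{i ∈ e} x_i`. -/
def polyValue (E : Finset (Finset ℕ)) (x : ℕ → ℝ) : ℝ :=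
  ∑ e ∈ E, ∏ i ∈ e, x i

/-- A legal weighting: nonnegative, supported on the vertex set, summing to 1. -/
def LegalWeighting (G : RHypergraph r) (x : ℕ → ℝ) : Prop :=
  (∀ i, 0 ≤ x i) ∧ (∀ i ∉ G.verts, x i = 0) ∧ ∑ i ∈ G.verts, x i = 1

/-- The Lagrangian of a hypergraph. -/
noncomputable def lagrangian (G : RHypergraph r) : ℝ :=
  sSup {l : ℝ | ∃ x, G.LegalWeighting x ∧ l = polyValue G.edges x}

/-- An optimum weighting attains the Lagrangian. -/
def IsOptimal (G : RHypergraph r) (x : ℕ → ℝ) : Prop :=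
  G.LegalWeighting x ∧ polyValue G.edges x = G.lagrangian

def IsSubgraph (H G : RHypergraph r) : Prop :=
  H.verts ⊆ G.verts ∧ H.edges ⊆ G.edges

def IsProperSubgraph (H G : RHypergraph r) : Prop :=
  H.IsSubgraph G ∧ (H.verts ≠ G.verts ∨ H.edges ≠ G.edges)

/-- A hypergraph is dense if every proper subgraph has strictly smaller Lagrangian. -/
def Dense (G : RHypergraph r) : Prop :=
  ∀ H : RHypergraph r, H.IsProperSubgraph G → H.lagrangian < G.lagrangian

/-- The link `E_i` of a vertex `i`. -/
def link (G : RHypergraph r) (i : ℕ) : Finset (Finset ℕ) :=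
  (G.edges.filter fun e => i ∈ e).image fun e => e.erase i

/-- The pair link `E_{ij}`. -/
def pairLink (G : RHypergraph r) (i j : ℕ) : Finset (Finset ℕ) :=
  (G.edges.filter fun e => i ∈ e ∧ j ∈ e).image fun e => (e.erase i).erase j

/-- `E_{i \ j} = E_i ∩ E_j^c`. -/
def linkDiff (G : RHypergraph r) (i j : ℕ) : Finset (Finset ℕ) :=
  (G.link i).filter fun A => j ∉ A ∧ insert j A ∉ G.edges

/-- `G` contains a clique of order `t`. -/
def HasClique (G : RHypergraph r) (t : ℕ) : Prop :=
  ∃ S ⊆ G.verts, S.card = t ∧ S.powersetCard r ⊆ G.edges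

/-- `G` is left-compressed: replacing a vertex of an edge by a smaller vertex
not in the edge yields an edge. -/
def LeftCompressed (G : RHypergraph r) : Prop :=
  ∀ e ∈ G.edges, ∀ i j : ℕ, i ∈ G.verts → i < j → j ∈ e → i ∉ e →
    insert i (e.erase j) ∈ G.edges

/-- The subgraph induced on a vertex set `S`. -/
def induce (G : RHypergraph r) (S : Finset ℕ) : RHypergraph r :=
  ⟨G.verts ∩ S, G.edges.filter fun e => e ⊆ S,
   fun e he => Finset.subset_inter (G.edge_sub e (Finset.mem_filter.mp he).1)
     (Finset.mem_filter.mp he).2,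
   fun e he => G.edge_card e (Finset.mem_filter.mp he).1⟩

end RHypergraph

/-- The complete `r`-graph on vertex set `{1, …, t}`. -/
def completeHG (t r : ℕ) : RHypergraph r :=
  ⟨Finset.Icc 1 t, (Finset.Icc 1 t).powersetCard r,
   fun _ he => (Finset.mem_powersetCard.mp he).1,
   fun _ he => (Finset.mem_powersetCard.mp he).2⟩

/-- `H₁ = [t-1]^{(3)} \ {(t-3)(t-2)(t-1)}`. -/
def H1 (t : ℕ) : RHypergraph 3 :=
  ⟨Finset.Icc 1 (t-1), (completeHG (t-1) 3).edges.erase {t-3, t-2, t-1},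
   fun e he => (completeHG (t-1) 3).edge_sub e (Finset.mem_of_mem_erase he),
   fun e he => (completeHG (t-1) 3).edge_card e (Finset.mem_of_mem_erase he)⟩


namespace MS

open Finset RHypergraph

lemma polyValue_split (E : Finset (Finset ℕ)) (x : ℕ → ℝ) (v : ℕ) :
    polyValue E x = polyValue (E.filter (fun e => v ∉ e)) x
      + x v * ∑ e ∈ E.filter (fun e => v ∈ e), ∏ i ∈ e.erase v, x i := by
  unfold RHypergraph.polyValue
  rw [← Finset.sum_filter_add_sum_filter_not E (fun e => v ∈ e), Finset.mul_sum, add_comm]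
  congr 1
  exact Finset.sum_congr rfl fun e he =>
    (Finset.mul_prod_erase e x (Finset.mem_filter.mp he).2).symm

lemma sum_pc_two (S : Finset ℕ) (x : ℕ → ℝ) :
    ∑ e ∈ S.powersetCard 2, ∏ i ∈ e, x i
      = ((∑ i ∈ S, x i)^2 - ∑ i ∈ S, (x i)^2) / 2 := by
  induction S using Finset.induction_on with
  | empty =>
    rw [Finset.powersetCard_eq_empty.mpr (by simp)]
    simp
  | insert a s ha ih =>
    rw [Finset.powersetCard_succ_insert ha, Finset.sum_union, ih]
    · rw [Finset.sum_image, Finset.sum_insert ha, Finset.sum_insert ha]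
      · have key : ∑ e ∈ s.powersetCard 1, ∏ i ∈ insert a e, x i
            = x a * ∑ i ∈ s, x i := by
          rw [Finset.powersetCard_one, Finset.sum_map, Finset.mul_sum]
          refine Finset.sum_congr rfl fun i hi => ?_
          simp only [Function.Embedding.coeFn_mk]
          rw [Finset.prod_insert (by simp only [Finset.mem_singleton]; rintro rfl; exact ha hi)]
          simp
        rw [key]; ring
      · intro A hA B hB hAB
        have hA' := (Finset.mem_powersetCard.mp hA).1
        have hB' := (Finset.mem_powersetCard.mp hB).1
        rw [← Finset.erase_insert (fun h => ha (hA' h)), hAB,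
          Finset.erase_insert (fun h => ha (hB' h))]
    · rw [Finset.disjoint_left]
      intro e he he'
      obtain ⟨A, _, rfl⟩ := Finset.mem_image.mp he'
      exact ha ((Finset.mem_powersetCard.mp he).1 (Finset.mem_insert_self a A))

/-- Weight shifting: moving all weight from `j` to `i` when no edge contains both
and the link value of `j` is at most that of `i`. -/
lemma shift (G : RHypergraph 2) (x : ℕ → ℝ) (hx : G.LegalWeighting x) (i j : ℕ)
    (hij : i ≠ j) (hi : i ∈ G.verts) (hj : j ∈ G.verts)
    (hne : ∀ e ∈ G.edges, ¬(i ∈ e ∧ j ∈ e))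
    (hL : ∑ e ∈ G.edges.filter (fun e => j ∈ e), ∏ k ∈ e.erase j, x k
        ≤ ∑ e ∈ G.edges.filter (fun e => i ∈ e), ∏ k ∈ e.erase i, x k) :
    G.LegalWeighting (Function.update (Function.update x j 0) i (x i + x j)) ∧
    polyValue G.edges x
      ≤ polyValue G.edges (Function.update (Function.update x j 0) i (x i + x j)) := by
  obtain ⟨hx0, hxv, hxs⟩ := hx
  set x' := Function.update (Function.update x j 0) i (x i + x j) with hx'
  have hx'i : x' i = x i + x j := by simp [hx']
  have hx'j : x' j = 0 := by simp [hx', Function.update_of_ne (Ne.symm hij)]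
  have hx'k : ∀ k, k ≠ i → k ≠ j → x' k = x k := by
    intro k hki hkj
    simp [hx', Function.update_of_ne hki, Function.update_of_ne hkj]
  have hleg : G.LegalWeighting x' := by
    refine ⟨?_, ?_, ?_⟩
    · intro k
      rcases eq_or_ne k i with rfl | hki
      · rw [hx'i]; exact add_nonneg (hx0 k) (hx0 j)
      rcases eq_or_ne k j with rfl | hkj
      · rw [hx'j]
      · rw [hx'k k hki hkj]; exact hx0 k
    · intro k hk
      rw [hx'k k (fun h => hk (h ▸ hi)) (fun h => hk (h ▸ hj))]
      exact hxv k hk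
    · have h1 : ∑ v ∈ G.verts, x' v
          = (x i + x j) + ∑ v ∈ G.verts \ {i}, Function.update x j 0 v :=
        Finset.sum_update_of_mem hi _ _
      have hj' : j ∈ G.verts \ {i} := by
        simp [Finset.mem_sdiff, hj, Ne.symm hij]
      have h2 : ∑ v ∈ G.verts \ {i}, Function.update x j 0 v
          = 0 + ∑ v ∈ (G.verts \ {i}) \ {j}, x v :=
        Finset.sum_update_of_mem hj' _ _
      have h3 : ∑ v ∈ G.verts, x v = x i + ∑ v ∈ G.verts \ {i}, x v := by
        rw [Finset.sdiff_singleton_eq_erase]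
        exact (Finset.add_sum_erase _ _ hi).symm
      have h4 : ∑ v ∈ G.verts \ {i}, x v = x j + ∑ v ∈ (G.verts \ {i}) \ {j}, x v := by
        rw [show (G.verts \ {i}) \ {j} = (G.verts \ {i}).erase j from
          Finset.sdiff_singleton_eq_erase _ _]
        exact (Finset.add_sum_erase _ _ hj').symm
      rw [h1, h2]
      rw [h3, h4] at hxs
      linarith
  refine ⟨hleg, ?_⟩
  -- decomposition
  have hfilter : (G.edges.filter (fun e => i ∉ e)).filter (fun e => j ∈ e)
      = G.edges.filter (fun e => j ∈ e) := by
    rw [Finset.filter_filter]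
    refine Finset.filter_congr fun e he => ?_
    constructor
    · exact fun h => h.2
    · intro h
      exact ⟨fun hie => hne e he ⟨hie, h⟩, h⟩
  have decomp : ∀ y : ℕ → ℝ, polyValue G.edges y
      = polyValue ((G.edges.filter (fun e => i ∉ e)).filter (fun e => j ∉ e)) y
        + y j * ∑ e ∈ G.edges.filter (fun e => j ∈ e), ∏ k ∈ e.erase j, y k
        + y i * ∑ e ∈ G.edges.filter (fun e => i ∈ e), ∏ k ∈ e.erase i, y k := by
    intro y
    rw [polyValue_split G.edges y i, polyValue_split (G.edges.filter (fun e => i ∉ e)) y j,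
      hfilter]
  have hB : polyValue ((G.edges.filter (fun e => i ∉ e)).filter (fun e => j ∉ e)) x'
      = polyValue ((G.edges.filter (fun e => i ∉ e)).filter (fun e => j ∉ e)) x := by
    unfold RHypergraph.polyValue
    refine Finset.sum_congr rfl fun e he => Finset.prod_congr rfl fun k hk => ?_
    simp only [Finset.mem_filter] at he
    exact hx'k k (fun h => he.1.2 (h ▸ hk)) (fun h => he.2 (h ▸ hk))
  have hLi : ∀ e ∈ G.edges.filter (fun e => i ∈ e),
      ∏ k ∈ e.erase i, x' k = ∏ k ∈ e.erase i, x k := by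
    intro e he
    simp only [Finset.mem_filter] at he
    refine Finset.prod_congr rfl fun k hk => ?_
    refine hx'k k (Finset.ne_of_mem_erase hk) fun h => ?_
    exact hne e he.1 ⟨he.2, h ▸ Finset.mem_of_mem_erase hk⟩
  have hLj : ∀ e ∈ G.edges.filter (fun e => j ∈ e),
      ∏ k ∈ e.erase j, x' k = ∏ k ∈ e.erase j, x k := by
    intro e he
    simp only [Finset.mem_filter] at he
    refine Finset.prod_congr rfl fun k hk => ?_
    refine hx'k k (fun h => ?_) (Finset.ne_of_mem_erase hk)
    exact hne e he.1 ⟨h ▸ Finset.mem_of_mem_erase hk, he.2⟩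
  rw [decomp x, decomp x', hB, hx'i, hx'j,
    Finset.sum_congr rfl hLi, Finset.sum_congr rfl hLj]
  have := mul_le_mul_of_nonneg_left hL (hx0 j)
  nlinarith [this]

/-- If the support is a clique, the standard Cauchy–Schwarz bound applies. -/
lemma clique_case (G : RHypergraph 2) (t : ℕ) (ht : 0 < t)
    (hmax : ¬ G.HasClique (t + 1)) (x : ℕ → ℝ) (hx : G.LegalWeighting x)
    (hclq : ∀ a ∈ G.verts.filter (fun i => x i ≠ 0),
      ∀ b ∈ G.verts.filter (fun i => x i ≠ 0), a ≠ b → ({a, b} : Finset ℕ) ∈ G.edges) :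
    polyValue G.edges x ≤ 1/2 * (1 - 1/(t : ℝ)) := by
  obtain ⟨hx0, hxv, hxs⟩ := hx
  set S := G.verts.filter (fun i => x i ≠ 0) with hS
  have hsum : ∑ i ∈ S, x i = 1 := by
    rw [hS, Finset.sum_filter_ne_zero]; exact hxs
  have hSne : S.Nonempty := by
    rcases Finset.eq_empty_or_nonempty S with h | h
    · rw [h] at hsum; simp at hsum
    · exact h
  have hScard : S.card ≤ t := by
    by_contra h
    push_neg at h
    obtain ⟨T, hTS, hTcard⟩ := Finset.exists_subset_card_eq h
    refine hmax ⟨T, hTS.trans (Finset.filter_subset _ _), hTcard, fun e he => ?_⟩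
    obtain ⟨heT, hecard⟩ := Finset.mem_powersetCard.mp he
    obtain ⟨a, b, hab, rfl⟩ := Finset.card_eq_two.mp hecard
    exact hclq a (hTS (heT (by simp))) b (hTS (heT (by simp))) hab
  have hpos : (0 : ℝ) < S.card := by
    exact_mod_cast Finset.card_pos.mpr hSne
  -- polyValue bounded by sum over pairs in S
  have step1 : polyValue G.edges x ≤ ∑ e ∈ S.powersetCard 2, ∏ i ∈ e, x i := by
    have hzero : ∀ e ∈ G.edges, ¬ e ⊆ S → ∏ i ∈ e, x i = 0 := by
      intro e he hnot
      obtain ⟨v, hv, hvS⟩ := Finset.not_subset.mp hnot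
      refine Finset.prod_eq_zero hv ?_
      by_contra hxne
      exact hvS (Finset.mem_filter.mpr ⟨G.edge_sub e he hv, hxne⟩)
    have : polyValue G.edges x = ∑ e ∈ G.edges.filter (fun e => e ⊆ S), ∏ i ∈ e, x i := by
      unfold RHypergraph.polyValue
      rw [← Finset.sum_filter_add_sum_filter_not G.edges (fun e => e ⊆ S)]
      rw [Finset.sum_eq_zero (fun e he => hzero e (Finset.mem_filter.mp he).1
        (Finset.mem_filter.mp he).2), add_zero]
    rw [this]
    refine Finset.sum_le_sum_of_subset_of_nonneg ?_ ?_
    · intro e he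
      obtain ⟨he1, he2⟩ := Finset.mem_filter.mp he
      exact Finset.mem_powersetCard.mpr ⟨he2, G.edge_card e he1⟩
    · intro e _ _
      exact Finset.prod_nonneg fun i _ => hx0 i
  rw [sum_pc_two, hsum] at step1
  have hcs : (1 : ℝ) ≤ S.card * ∑ i ∈ S, (x i)^2 := by
    have := sq_sum_le_card_mul_sum_sq (s := S) (f := x)
    rw [hsum] at this
    simpa using this
  have hsq : (1 : ℝ) / S.card ≤ ∑ i ∈ S, (x i)^2 := by
    rw [div_le_iff₀ hpos] at *
    linarith [hcs]
  have hfrac : (1 : ℝ) / t ≤ 1 / S.card := by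
    apply one_div_le_one_div_of_le hpos
    exact_mod_cast hScard
  calc polyValue G.edges x ≤ (1^2 - ∑ i ∈ S, (x i)^2) / 2 := step1
    _ ≤ 1/2 * (1 - 1/(t : ℝ)) := by
        have := hfrac.trans hsq
        linarith

/-- Main upper bound by induction on the support size. -/
lemma upper (G : RHypergraph 2) (t : ℕ) (ht : 0 < t) (hmax : ¬ G.HasClique (t + 1)) :
    ∀ n (x : ℕ → ℝ), G.LegalWeighting x →
      (G.verts.filter fun i => x i ≠ 0).card ≤ n →
      polyValue G.edges x ≤ 1/2 * (1 - 1/(t : ℝ)) := by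
  intro n
  induction n with
  | zero =>
    intro x hx hcard
    exfalso
    have hsum : ∑ i ∈ G.verts.filter (fun i => x i ≠ 0), x i = 1 := by
      rw [Finset.sum_filter_ne_zero]; exact hx.2.2
    rw [Finset.card_eq_zero.mp (Nat.le_zero.mp hcard)] at hsum
    simp at hsum
  | succ n ih =>
    intro x hx hcard
    set S := G.verts.filter (fun i => x i ≠ 0) with hSdef
    by_cases hclq : ∀ a ∈ S, ∀ b ∈ S, a ≠ b → ({a, b} : Finset ℕ) ∈ G.edges
    · exact clique_case G t ht hmax x hx hclq
    · push_neg at hclq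
      obtain ⟨a, ha, b, hb, hab, hedge⟩ := hclq
      have hmemv : ∀ c ∈ S, c ∈ G.verts := fun c hc => (Finset.mem_filter.mp hc).1
      have hne : ∀ e ∈ G.edges, ¬(a ∈ e ∧ b ∈ e) := by
        rintro e he ⟨hae, hbe⟩
        apply hedge
        have hsub : ({a, b} : Finset ℕ) ⊆ e := by
          intro c hc
          rcases Finset.mem_insert.mp hc with rfl | hc
          · exact hae
          · rw [Finset.mem_singleton.mp hc]; exact hbe
        have : ({a, b} : Finset ℕ) = e := by
          apply Finset.eq_of_subset_of_card_le hsub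
          rw [G.edge_card e he, Finset.card_insert_of_notMem (by simpa using hab),
            Finset.card_singleton]
        rw [this]; exact he
      -- choose direction by comparing link values
      have main : ∀ i j, i ≠ j → i ∈ S → j ∈ S →
          (∀ e ∈ G.edges, ¬(i ∈ e ∧ j ∈ e)) →
          (∑ e ∈ G.edges.filter (fun e => j ∈ e), ∏ k ∈ e.erase j, x k
            ≤ ∑ e ∈ G.edges.filter (fun e => i ∈ e), ∏ k ∈ e.erase i, x k) →
          polyValue G.edges x ≤ 1/2 * (1 - 1/(t : ℝ)) := by
        intro i j hij hiS hjS hne' hL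
        obtain ⟨hleg, hmono⟩ := shift G x hx i j hij (hmemv i hiS) (hmemv j hjS) hne' hL
        set x' := Function.update (Function.update x j 0) i (x i + x j) with hx'def
        refine hmono.trans (ih x' hleg ?_)
        have hsub : G.verts.filter (fun k => x' k ≠ 0) ⊆ S.erase j := by
          intro k hk
          obtain ⟨hkv, hkne⟩ := Finset.mem_filter.mp hk
          have hkj : k ≠ j := by
            rintro rfl
            apply hkne
            simp [hx'def, Function.update_of_ne (Ne.symm hij)]
          refine Finset.mem_erase.mpr ⟨hkj, ?_⟩
          rcases eq_or_ne k i with rfl | hki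
          · exact hiS
          · refine Finset.mem_filter.mpr ⟨hkv, ?_⟩
            intro h
            apply hkne
            simp [hx'def, Function.update_of_ne hki, Function.update_of_ne hkj, h]
        calc (G.verts.filter (fun k => x' k ≠ 0)).card ≤ (S.erase j).card :=
              Finset.card_le_card hsub
          _ = S.card - 1 := Finset.card_erase_of_mem hjS
          _ ≤ n := by omega
      rcases le_total (∑ e ∈ G.edges.filter (fun e => b ∈ e), ∏ k ∈ e.erase b, x k)
          (∑ e ∈ G.edges.filter (fun e => a ∈ e), ∏ k ∈ e.erase a, x k) with h | h
      · exact main a b hab ha hb hne h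
      · exact main b a (Ne.symm hab) hb ha (fun e he hc => hne e he ⟨hc.2, hc.1⟩) h

lemma lagrangian_eq (G : RHypergraph 2) (t : ℕ) (ht : 0 < t) (hclique : G.HasClique t)
    (hmax : ¬ G.HasClique (t + 1)) : G.lagrangian = 1/2 * (1 - 1/(t : ℝ)) := by
  obtain ⟨S, hSv, hScard, hSpow⟩ := hclique
  have htR : (0 : ℝ) < t := by exact_mod_cast ht
  set x : ℕ → ℝ := fun i => if i ∈ S then 1/(t : ℝ) else 0 with hxdef
  have hleg : G.LegalWeighting x := by
    refine ⟨fun i => ?_, fun i hi => ?_, ?_⟩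
    · rw [hxdef]; dsimp only; split <;> positivity
    · rw [hxdef]; dsimp only
      rw [if_neg (fun h => hi (hSv h))]
    · rw [hxdef]; dsimp only
      rw [Finset.sum_ite_mem, Finset.inter_eq_right.mpr hSv, Finset.sum_const, hScard]
      rw [nsmul_eq_mul]
      field_simp
  have hval : 1/2 * (1 - 1/(t : ℝ)) ≤ polyValue G.edges x := by
    have h1 : ∑ e ∈ S.powersetCard 2, ∏ i ∈ e, x i ≤ polyValue G.edges x := by
      refine Finset.sum_le_sum_of_subset_of_nonneg hSpow fun e _ _ =>
        Finset.prod_nonneg fun i _ => hleg.1 i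
    have h2 : ∑ e ∈ S.powersetCard 2, ∏ i ∈ e, x i
        = (t.choose 2 : ℝ) * (1/(t : ℝ))^2 := by
      rw [Finset.sum_congr rfl (fun e he => ?_), Finset.sum_const, nsmul_eq_mul,
        Finset.card_powersetCard, hScard]
      obtain ⟨heS, hecard⟩ := Finset.mem_powersetCard.mp he
      rw [Finset.prod_congr rfl (fun i hi => ?_), Finset.prod_const, hecard]
      rw [hxdef]; dsimp only
      rw [if_pos (heS hi)]
    have h3 : (t.choose 2 : ℝ) * (1/(t : ℝ))^2 = 1/2 * (1 - 1/(t : ℝ)) := by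
      rw [Nat.cast_choose_two]
      field_simp
    rw [h2, h3] at h1
    exact h1
  have hub : ∀ l ∈ {l : ℝ | ∃ y, G.LegalWeighting y ∧ l = polyValue G.edges y},
      l ≤ 1/2 * (1 - 1/(t : ℝ)) := by
    rintro l ⟨y, hy, rfl⟩
    exact upper G t ht hmax (G.verts.filter fun i => y i ≠ 0).card y hy le_rfl
  have hmem : polyValue G.edges x ∈
      {l : ℝ | ∃ y, G.LegalWeighting y ∧ l = polyValue G.edges y} := ⟨x, hleg, rfl⟩
  have hxval : polyValue G.edges x = 1/2 * (1 - 1/(t : ℝ)) :=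
    le_antisymm (hub _ hmem) hval
  unfold RHypergraph.lagrangian
  apply le_antisymm
  · exact csSup_le ⟨_, hmem⟩ hub
  · rw [← hxval]
    exact le_csSup ⟨_, hub⟩ hmem

lemma complete_hasClique (t : ℕ) : (completeHG t 2).HasClique t := by
  exact ⟨Finset.Icc 1 t, subset_rfl, by rw [Nat.card_Icc]; omega, subset_rfl⟩

lemma complete_not_hasClique (t : ℕ) : ¬ (completeHG t 2).HasClique (t + 1) := by
  rintro ⟨S, hS, hcard, -⟩
  have := Finset.card_le_card hS
  rw [hcard] at this
  simp only [completeHG, Nat.card_Icc] at this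
  omega

end MS

/-- Motzkin–Straus: if the largest clique of a 2-graph has order `t`, then
`λ(G) = λ(K_t) = (1/2)(1 - 1/t)`. -/
theorem motzkin_straus (G : RHypergraph 2) (t : ℕ) (ht : 0 < t)
    (hclique : G.HasClique t) (hmax : ¬ G.HasClique (t + 1)) :
    G.lagrangian = (completeHG t 2).lagrangian ∧
    G.lagrangian = (1 / 2) * (1 - 1 / (t : ℝ)) := by
  have h1 := MS.lagrangian_eq G t ht hclique hmax
  have h2 := MS.lagrangian_eq (completeHG t 2) t ht (MS.complete_hasClique t)
    (MS.complete_not_hasClique t)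
  constructor
  · rw [h1, h2]
  · rw [h1]
end

section
/- Let G be an r-uniform hypergraph and x = (x₁,…,xₙ) an optimum weighting for G with exactly k positive weights x₁,…,x_k. Then for every i ∈ [k], λ(E_i, x) = r·λ(G), where E_i is the link of vertex i; in particular λ(E_i,x) = λ(E_j,x) for all i, j ∈ [k]. -/
namespace FR

variable {r : ℕ}

noncomputable def L (G : RHypergraph r) (x : ℕ → ℝ) (i : ℕ) : ℝ :=
  ∑ e ∈ G.edges.filter (fun e => i ∈ e), ∏ v ∈ e.erase i, x v

lemma link_eq (G : RHypergraph r) (x : ℕ → ℝ) (i : ℕ) :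
    RHypergraph.polyValue (G.link i) x = L G x i := by
  unfold RHypergraph.polyValue RHypergraph.link L
  rw [Finset.sum_image]
  intro a ha b hb h
  have hai : i ∈ a := (Finset.mem_filter.mp ha).2
  have hbi : i ∈ b := (Finset.mem_filter.mp hb).2
  have h2 := congrArg (insert i) h
  rwa [Finset.insert_erase hai, Finset.insert_erase hbi] at h2

lemma L_eq_ite (G : RHypergraph r) (x : ℕ → ℝ) (i : ℕ) :
    L G x i = ∑ e ∈ G.edges, if i ∈ e then ∏ u ∈ e.erase i, x u else 0 :=
  Finset.sum_filter _ _

lemma le_lag (G : RHypergraph r) (y : ℕ → ℝ) (hy : G.LegalWeighting y) :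
    RHypergraph.polyValue G.edges y ≤ G.lagrangian := by
  apply le_csSup
  · refine ⟨(G.edges.card : ℝ), ?_⟩
    rintro l ⟨z, hz, rfl⟩
    calc RHypergraph.polyValue G.edges z ≤ ∑ _e ∈ G.edges, (1 : ℝ) := by
          apply Finset.sum_le_sum
          intro e he
          apply Finset.prod_le_one
          · intro v _; exact hz.1 v
          · intro v hv
            have hvv : v ∈ G.verts := G.edge_sub e he hv
            calc z v ≤ ∑ u ∈ G.verts, z u :=
                  Finset.single_le_sum (fun u _ => hz.1 u) hvv
              _ = 1 := hz.2.2
      _ = G.edges.card := by simp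
  · exact ⟨y, hy, rfl⟩

lemma euler (G : RHypergraph r) (x : ℕ → ℝ) :
    ∑ v ∈ G.verts, x v * L G x v = r * RHypergraph.polyValue G.edges x := by
  unfold L RHypergraph.polyValue
  have h1 : ∀ v, x v * ∑ e ∈ G.edges.filter (fun e => v ∈ e), ∏ u ∈ e.erase v, x u
      = ∑ e ∈ G.edges, if v ∈ e then x v * ∏ u ∈ e.erase v, x u else 0 := by
    intro v
    rw [Finset.sum_filter, Finset.mul_sum]
    exact Finset.sum_congr rfl fun e _ => by split <;> simp
  simp_rw [h1]
  rw [Finset.sum_comm, Finset.mul_sum]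
  refine Finset.sum_congr rfl fun e he => ?_
  rw [Finset.sum_ite_mem, Finset.inter_eq_right.mpr (G.edge_sub e he)]
  have h2 : ∀ v ∈ e, x v * ∏ u ∈ e.erase v, x u = ∏ u ∈ e, x u :=
    fun v hv => Finset.mul_prod_erase e x hv
  rw [Finset.sum_congr rfl h2, Finset.sum_const, G.edge_card e he, nsmul_eq_mul]

lemma quad_le {B C ε : ℝ} (hε : 0 < ε)
    (h : ∀ t : ℝ, 0 < t → t ≤ ε → B * t + C * t ^ 2 ≤ 0) : B ≤ 0 := by
  by_contra hB
  push_neg at hB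
  set t := min ε (B / (|C| + 1)) with ht
  have hC1 : (0 : ℝ) < |C| + 1 := by positivity
  have ht0 : 0 < t := lt_min hε (div_pos hB hC1)
  have hht := h t ht0 (min_le_left _ _)
  have h2 : t * (|C| + 1) ≤ B := by
    rw [← le_div_iff₀ hC1]
    exact min_le_right _ _
  have h3 : -(|C| * t ^ 2) ≤ C * t ^ 2 := by nlinarith [neg_abs_le C, sq_nonneg t]
  nlinarith [mul_le_mul_of_nonneg_right h2 ht0.le, mul_pos ht0 ht0]

lemma quad_zero {B C ε : ℝ} (hε : 0 < ε)
    (h : ∀ t : ℝ, |t| ≤ ε → B * t + C * t ^ 2 ≤ 0) : B = 0 := by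
  have h1 : B ≤ 0 := quad_le hε fun t ht0 hte => h t (by rw [abs_of_pos ht0]; exact hte)
  have h2 : -B ≤ 0 := by
    apply quad_le (B := -B) (C := C) hε
    intro t ht0 hte
    have := h (-t) (by rw [abs_neg, abs_of_pos ht0]; exact hte)
    nlinarith
  linarith

lemma links_eq (G : RHypergraph r) (x : ℕ → ℝ) (hx : G.IsOptimal x)
    {i j : ℕ} (hi : i ∈ G.verts) (hj : j ∈ G.verts) (hij : i ≠ j)
    (hxi : 0 < x i) (hxj : 0 < x j) : L G x i = L G x j := by
  set ε := min (x i) (x j) with hεdef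
  have hε0 : 0 < ε := lt_min hxi hxj
  set C : ℝ := ∑ e ∈ G.edges,
      (if i ∈ e ∧ j ∈ e then -(∏ u ∈ (e.erase i).erase j, x u) else 0) with hCdef
  have key : ∀ t : ℝ, |t| ≤ ε → (L G x i - L G x j) * t + C * t ^ 2 ≤ 0 := by
    intro t ht
    have habs := abs_le.mp ht
    set y : ℕ → ℝ := fun v => if v = i then x i + t else if v = j then x j - t else x v
      with hydef
    have hyi : y i = x i + t := by simp [hydef]
    have hyj : y j = x j - t := by simp [hydef, hij.symm]
    have hyo : ∀ v, v ≠ i → v ≠ j → y v = x v := by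
      intro v h1 h2; simp [hydef, h1, h2]
    have hleg : G.LegalWeighting y := by
      refine ⟨?_, ?_, ?_⟩
      · intro v
        by_cases h1 : v = i
        · rw [h1, hyi]
          have h3 := min_le_left (x i) (x j)
          linarith [habs.1]
        · by_cases h2 : v = j
          · rw [h2, hyj]
            have h3 := min_le_right (x i) (x j)
            linarith [habs.2]
          · rw [hyo v h1 h2]; exact hx.1.1 v
      · intro v hv
        have h1 : v ≠ i := fun h => hv (h ▸ hi)
        have h2 : v ≠ j := fun h => hv (h ▸ hj)
        rw [hyo v h1 h2]; exact hx.1.2.1 v hv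
      · have hsum : ∀ v, y v = x v + (if v = i then t else 0) + (if v = j then -t else 0) := by
          intro v
          by_cases h1 : v = i
          · rw [h1]; simp [hyi, hij]
          · by_cases h2 : v = j
            · rw [h2]; simp [hyj, Ne.symm hij, sub_eq_add_neg]
            · simp [hyo v h1 h2, h1, h2]
        rw [Finset.sum_congr rfl fun v _ => hsum v, Finset.sum_add_distrib,
          Finset.sum_add_distrib, Finset.sum_ite_eq', Finset.sum_ite_eq', hx.1.2.2]
        simp [hi, hj]
    have hexp : RHypergraph.polyValue G.edges y
        = RHypergraph.polyValue G.edges x + (L G x i - L G x j) * t + C * t ^ 2 := by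
      have hper : ∀ e ∈ G.edges, ∏ v ∈ e, y v
          = ∏ v ∈ e, x v
            + ((if i ∈ e then ∏ u ∈ e.erase i, x u else 0)
               - (if j ∈ e then ∏ u ∈ e.erase j, x u else 0)) * t
            + (if i ∈ e ∧ j ∈ e then -(∏ u ∈ (e.erase i).erase j, x u) else 0) * t ^ 2 := by
        intro e _he
        by_cases hie : i ∈ e <;> by_cases hje : j ∈ e
        · have hj' : j ∈ e.erase i := Finset.mem_erase.mpr ⟨hij.symm, hje⟩
          have hi' : i ∈ e.erase j := Finset.mem_erase.mpr ⟨hij, hie⟩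
          have e1 : ∏ v ∈ e, y v = y i * (y j * ∏ v ∈ (e.erase i).erase j, y v) := by
            rw [Finset.mul_prod_erase _ y hj', Finset.mul_prod_erase e y hie]
          have e2 : ∏ v ∈ (e.erase i).erase j, y v = ∏ v ∈ (e.erase i).erase j, x v := by
            refine Finset.prod_congr rfl fun v hv => ?_
            exact hyo v (Finset.mem_erase.mp (Finset.mem_erase.mp hv).2).1
              (Finset.mem_erase.mp hv).1
          have e3 : ∏ v ∈ e, x v = x i * (x j * ∏ v ∈ (e.erase i).erase j, x v) := by
            rw [Finset.mul_prod_erase _ x hj', Finset.mul_prod_erase e x hie]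
          have e4 : ∏ u ∈ e.erase i, x u = x j * ∏ v ∈ (e.erase i).erase j, x v :=
            (Finset.mul_prod_erase _ x hj').symm
          have e5 : ∏ u ∈ e.erase j, x u = x i * ∏ v ∈ (e.erase i).erase j, x v := by
            rw [← Finset.mul_prod_erase _ x hi', Finset.erase_right_comm]
          rw [e1, e2, e3, e4, e5, hyi, hyj]
          simp only [hie, hje, and_self, if_true]
          ring
        · have e1 : ∏ v ∈ e, y v = y i * ∏ v ∈ e.erase i, y v :=
            (Finset.mul_prod_erase e y hie).symm
          have e2 : ∏ v ∈ e.erase i, y v = ∏ v ∈ e.erase i, x v := by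
            refine Finset.prod_congr rfl fun v hv => ?_
            exact hyo v (Finset.mem_erase.mp hv).1 (fun h => hje (h ▸ Finset.mem_of_mem_erase hv))
          have e3 : ∏ v ∈ e, x v = x i * ∏ v ∈ e.erase i, x v :=
            (Finset.mul_prod_erase e x hie).symm
          rw [e1, e2, e3, hyi]
          simp only [hie, hje, if_true, if_false, and_false]
          ring
        · have e1 : ∏ v ∈ e, y v = y j * ∏ v ∈ e.erase j, y v :=
            (Finset.mul_prod_erase e y hje).symm
          have e2 : ∏ v ∈ e.erase j, y v = ∏ v ∈ e.erase j, x v := by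
            refine Finset.prod_congr rfl fun v hv => ?_
            exact hyo v (fun h => hie (h ▸ Finset.mem_of_mem_erase hv)) (Finset.mem_erase.mp hv).1
          have e3 : ∏ v ∈ e, x v = x j * ∏ v ∈ e.erase j, x v :=
            (Finset.mul_prod_erase e x hje).symm
          rw [e1, e2, e3, hyj]
          simp only [hie, hje, if_true, if_false, false_and]
          ring
        · have e1 : ∏ v ∈ e, y v = ∏ v ∈ e, x v := by
            refine Finset.prod_congr rfl fun v hv => ?_
            exact hyo v (fun h => hie (h ▸ hv)) (fun h => hje (h ▸ hv))
          rw [e1]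
          simp only [hie, hje, if_false, false_and]
          ring
      unfold RHypergraph.polyValue
      rw [Finset.sum_congr rfl hper, Finset.sum_add_distrib, Finset.sum_add_distrib,
        ← Finset.sum_mul, ← Finset.sum_mul, Finset.sum_sub_distrib, ← hCdef,
        L_eq_ite G x i, L_eq_ite G x j]
    have hle := le_lag G y hleg
    rw [hexp, ← hx.2] at hle
    linarith
  have hB := quad_zero hε0 key
  linarith

end FR

/-- Frankl–Rödl lemma (a): for an optimum weighting `x` and any vertex `i` with
positive weight, `λ(E_i, x) = r·λ(G)`. -/
theorem frankl_rodl_a {r : ℕ} (G : RHypergraph r) (x : ℕ → ℝ)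
    (hx : G.IsOptimal x) :
    ∀ i ∈ G.verts, 0 < x i →
      RHypergraph.polyValue (G.link i) x = (r : ℝ) * G.lagrangian := by
  intro i hi hxi
  rw [FR.link_eq]
  have heuler := FR.euler G x
  have hterm : ∀ v ∈ G.verts, x v * FR.L G x v = x v * FR.L G x i := by
    intro v hv
    rcases (hx.1.1 v).eq_or_lt with h0 | h0
    · rw [← h0, zero_mul, zero_mul]
    · by_cases hvi : v = i
      · rw [hvi]
      · rw [FR.links_eq G x hx hv hi hvi h0 hxi]
  rw [Finset.sum_congr rfl hterm, ← Finset.sum_mul, hx.1.2.2, one_mul] at heuler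
  rw [heuler, hx.2]
end

section
/- Let G be an r-uniform hypergraph and x an optimum weighting for G with exactly k positive weights, such that x has the minimal number of positive entries among all optimum weightings (any legal weighting with fewer positive entries gives strictly smaller value). Then for every pair i, j of vertices with positive weight, there is an edge of G containing both i and j. -/
private lemma aux_key {r : ℕ} (G : RHypergraph r) (x : ℕ → ℝ)
    (hleg : G.LegalWeighting x)
    (i j : ℕ) (hi : i ∈ G.verts) (hj : j ∈ G.verts)
    (hxi : 0 < x i) (hxj : 0 < x j) (hij : i ≠ j)
    (hno : ∀ e ∈ G.edges, ¬(i ∈ e ∧ j ∈ e))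
    (hAB : ∑ e ∈ G.edges.filter (fun e => j ∈ e), ∏ k ∈ e.erase j, x k ≤
           ∑ e ∈ G.edges.filter (fun e => i ∈ e), ∏ k ∈ e.erase i, x k) :
    ∃ y : ℕ → ℝ, G.LegalWeighting y ∧
      (G.verts.filter fun k => 0 < y k).card <
        (G.verts.filter fun k => 0 < x k).card ∧
      RHypergraph.polyValue G.edges x ≤ RHypergraph.polyValue G.edges y := by
  obtain ⟨hnn, hsupp, hsum⟩ := hleg
  set y : ℕ → ℝ := fun k => if k = j then 0 else if k = i then x i + x j else x k with hy
  have hyj : y j = 0 := by simp [hy]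
  have hyi : y i = x i + x j := by simp [hy, hij]
  have hyk : ∀ k, k ≠ i → k ≠ j → y k = x k := by
    intro k h1 h2; simp [hy, h1, h2]
  have hji : j ∈ G.verts.erase i := Finset.mem_erase.mpr ⟨hij.symm, hj⟩
  -- legality of y
  have hleg' : G.LegalWeighting y := by
    refine ⟨?_, ?_, ?_⟩
    · intro k
      by_cases h1 : k = j
      · simp [h1, hyj]
      · by_cases h2 : k = i
        · rw [h2, hyi]; positivity
        · rw [hyk k h2 h1]; exact hnn k
    · intro k hk
      have h1 : k ≠ i := fun h => hk (h ▸ hi)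
      have h2 : k ≠ j := fun h => hk (h ▸ hj)
      rw [hyk k h1 h2]; exact hsupp k hk
    · have hrest : ∑ k ∈ (G.verts.erase i).erase j, y k =
          ∑ k ∈ (G.verts.erase i).erase j, x k := by
        refine Finset.sum_congr rfl fun k hk => ?_
        have h2 : k ≠ j := (Finset.mem_erase.mp hk).1
        have h1 : k ≠ i := (Finset.mem_erase.mp (Finset.mem_erase.mp hk).2).1
        exact hyk k h1 h2
      rw [← Finset.add_sum_erase _ y hi, ← Finset.add_sum_erase _ y hji, hrest,
          hyi, hyj] at *
      rw [← Finset.add_sum_erase _ x hi, ← Finset.add_sum_erase _ x hji] at hsum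
      linarith
  refine ⟨y, hleg', ?_, ?_⟩
  · -- fewer positive entries
    have hfilt : (G.verts.filter fun k => 0 < y k) =
        (G.verts.filter fun k => 0 < x k).erase j := by
      ext k
      simp only [Finset.mem_filter, Finset.mem_erase]
      by_cases h1 : k = j
      · subst h1; simp [hyj]
      · by_cases h2 : k = i
        · subst h2
          constructor
          · intro h; exact ⟨hij, h.1, hxi⟩
          · intro h; refine ⟨hi, ?_⟩; rw [hyi]; positivity
        · rw [hyk k h2 h1]; tauto
    rw [hfilt]
    exact Finset.card_erase_lt_of_mem (Finset.mem_filter.mpr ⟨hj, hxj⟩)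
  · -- value does not decrease
    have hsplit : ∀ f : Finset ℕ → ℝ, ∑ e ∈ G.edges, f e =
        ∑ e ∈ G.edges.filter (fun e => i ∈ e), f e +
        (∑ e ∈ G.edges.filter (fun e => j ∈ e), f e +
         ∑ e ∈ G.edges.filter (fun e => i ∉ e ∧ j ∉ e), f e) := by
      intro f
      rw [← Finset.sum_filter_add_sum_filter_not G.edges (fun e => i ∈ e) f]
      congr 1
      rw [← Finset.sum_filter_add_sum_filter_not (G.edges.filter (fun e => ¬ i ∈ e))
        (fun e => j ∈ e) f]
      congr 1
      · congr 1
        rw [Finset.filter_filter]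
        apply Finset.filter_congr
        intro e he
        constructor
        · exact fun h => h.2
        · exact fun hje => ⟨fun hie => hno e he ⟨hie, hje⟩, hje⟩
      · congr 1
        rw [Finset.filter_filter]
    unfold RHypergraph.polyValue
    rw [hsplit (fun e => ∏ k ∈ e, y k), hsplit (fun e => ∏ k ∈ e, x k)]
    have hPyi : ∑ e ∈ G.edges.filter (fun e => i ∈ e), ∏ k ∈ e, y k =
        (x i + x j) * ∑ e ∈ G.edges.filter (fun e => i ∈ e), ∏ k ∈ e.erase i, x k := by
      rw [Finset.mul_sum]
      refine Finset.sum_congr rfl fun e he => ?_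
      obtain ⟨heE, hie⟩ := Finset.mem_filter.mp he
      have hje : j ∉ e := fun hje => hno e heE ⟨hie, hje⟩
      rw [← Finset.mul_prod_erase e y hie, hyi]
      congr 1
      refine Finset.prod_congr rfl fun k hk => ?_
      exact hyk k (Finset.mem_erase.mp hk).1 (fun h => hje (h ▸ (Finset.mem_erase.mp hk).2))
    have hPxi : ∑ e ∈ G.edges.filter (fun e => i ∈ e), ∏ k ∈ e, x k =
        x i * ∑ e ∈ G.edges.filter (fun e => i ∈ e), ∏ k ∈ e.erase i, x k := by
      rw [Finset.mul_sum]
      refine Finset.sum_congr rfl fun e he => ?_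
      exact (Finset.mul_prod_erase e x (Finset.mem_filter.mp he).2).symm
    have hPyj : ∑ e ∈ G.edges.filter (fun e => j ∈ e), ∏ k ∈ e, y k = 0 := by
      refine Finset.sum_eq_zero fun e he => ?_
      exact Finset.prod_eq_zero (Finset.mem_filter.mp he).2 hyj
    have hPxj : ∑ e ∈ G.edges.filter (fun e => j ∈ e), ∏ k ∈ e, x k =
        x j * ∑ e ∈ G.edges.filter (fun e => j ∈ e), ∏ k ∈ e.erase j, x k := by
      rw [Finset.mul_sum]
      refine Finset.sum_congr rfl fun e he => ?_
      exact (Finset.mul_prod_erase e x (Finset.mem_filter.mp he).2).symm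
    have hP0 : ∑ e ∈ G.edges.filter (fun e => i ∉ e ∧ j ∉ e), ∏ k ∈ e, y k =
        ∑ e ∈ G.edges.filter (fun e => i ∉ e ∧ j ∉ e), ∏ k ∈ e, x k := by
      refine Finset.sum_congr rfl fun e he => ?_
      obtain ⟨_, hie, hje⟩ := Finset.mem_filter.mp he
      refine Finset.prod_congr rfl fun k hk => ?_
      exact hyk k (fun h => hie (h ▸ hk)) (fun h => hje (h ▸ hk))
    rw [hPyi, hPxi, hPyj, hPxj, hP0]
    nlinarith [hnn j, sub_nonneg.mpr hAB]

/-- Frankl–Rödl lemma (b): if `x` is an optimum weighting with the minimal number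
of positive entries, then any two positive-weight vertices lie in a common edge. -/
theorem frankl_rodl_b {r : ℕ} (G : RHypergraph r) (x : ℕ → ℝ)
    (hx : G.IsOptimal x)
    (hmin : ∀ y : ℕ → ℝ, G.LegalWeighting y →
      (G.verts.filter fun i => 0 < y i).card <
        (G.verts.filter fun i => 0 < x i).card →
      RHypergraph.polyValue G.edges y < G.lagrangian) :
    ∀ i ∈ G.verts, ∀ j ∈ G.verts, 0 < x i → 0 < x j → i ≠ j →
      ∃ e ∈ G.edges, i ∈ e ∧ j ∈ e := by
  intro i hi j hj hxi hxj hij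
  by_contra hcon
  push_neg at hcon
  have hno : ∀ e ∈ G.edges, ¬(i ∈ e ∧ j ∈ e) := fun e he h => hcon e he h.1 h.2
  obtain ⟨hleg, hval⟩ := hx
  rcases le_total (∑ e ∈ G.edges.filter (fun e => j ∈ e), ∏ k ∈ e.erase j, x k)
      (∑ e ∈ G.edges.filter (fun e => i ∈ e), ∏ k ∈ e.erase i, x k) with h | h
  · obtain ⟨y, hyleg, hycard, hyval⟩ := aux_key G x hleg i j hi hj hxi hxj hij hno h
    have := hmin y hyleg hycard
    rw [← hval] at this
    linarith
  · obtain ⟨y, hyleg, hycard, hyval⟩ := aux_key G x hleg j i hj hi hxj hxi hij.symm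
      (fun e he hh => hno e he ⟨hh.2, hh.1⟩) h
    have := hmin y hyleg hycard
    rw [← hval] at this
    linarith
end
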